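/- Let G be a group fitting in an exact sequence 1 → F → G → ℤ² → 1 with F finite. Then G is almost abelian; moreover if G is torsion-free then G contains a subgroup of finite index isomorphic to ℤ². -/

import Mathlib

open Subgroup Pointwise

/-- A subgroup of `ℤ × ℤ` (written multiplicatively) containing `(p, 0)` and `(0, q)`
with `p q ≠ 0` has nonzero (i.e. finite) index. -/
private lemma Z2_index_ne_zero {M : Subgroup (Multiplicative (ℤ × ℤ))} {p q : ℤ}
    (hp : p ≠ 0) (hq : q ≠ 0)
    (hpM : Multiplicative.ofAdd ((p, 0) : ℤ × ℤ) ∈ M)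
    (hqM : Multiplicative.ofAdd ((0, q) : ℤ × ℤ) ∈ M) : M.index ≠ 0 := by
  have key : ∀ s t : ℤ, Multiplicative.ofAdd ((p * s, q * t) : ℤ × ℤ) ∈ M := by
    intro s t
    have h : Multiplicative.ofAdd ((p * s, q * t) : ℤ × ℤ)
        = (Multiplicative.ofAdd ((p, 0) : ℤ × ℤ)) ^ s
          * (Multiplicative.ofAdd ((0, q) : ℤ × ℤ)) ^ t := by
      apply Multiplicative.toAdd.injective
      simp [toAdd_zpow, Prod.ext_iff, mul_comm]
    rw [h]
    exact mul_mem (zpow_mem hpM s) (zpow_mem hqM t)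
  haveI : NeZero p.natAbs := ⟨by simpa using hp⟩
  haveI : NeZero q.natAbs := ⟨by simpa using hq⟩
  haveI : Finite (Multiplicative (ℤ × ℤ) ⧸ M) := by
    apply Finite.of_surjective
      (fun x : ZMod p.natAbs × ZMod q.natAbs =>
        (QuotientGroup.mk (Multiplicative.ofAdd (((x.1.val : ℤ), (x.2.val : ℤ)) : ℤ × ℤ))
          : Multiplicative (ℤ × ℤ) ⧸ M))
    have hsurj : ∀ i j : ℤ, ∃ x : ZMod p.natAbs × ZMod q.natAbs,
        (QuotientGroup.mk (Multiplicative.ofAdd ((i, j) : ℤ × ℤ))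
          : Multiplicative (ℤ × ℤ) ⧸ M)
        = QuotientGroup.mk
            (Multiplicative.ofAdd (((x.1.val : ℤ), (x.2.val : ℤ)) : ℤ × ℤ)) := by
      intro i j
      refine ⟨((i : ZMod p.natAbs), (j : ZMod q.natAbs)), ?_⟩
      rw [QuotientGroup.eq]
      have h1 : (p : ℤ) ∣ ((i : ZMod p.natAbs).val : ℤ) - i := by
        rw [← Int.natAbs_dvd, ← ZMod.intCast_zmod_eq_zero_iff_dvd]
        push_cast
        rw [ZMod.natCast_rightInverse _]
        ring
      have h2 : (q : ℤ) ∣ ((j : ZMod q.natAbs).val : ℤ) - j := by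
        rw [← Int.natAbs_dvd, ← ZMod.intCast_zmod_eq_zero_iff_dvd]
        push_cast
        rw [ZMod.natCast_rightInverse _]
        ring
      obtain ⟨s, hs⟩ := h1
      obtain ⟨t, ht⟩ := h2
      have hw : (Multiplicative.ofAdd ((i, j) : ℤ × ℤ))⁻¹
          * Multiplicative.ofAdd ((((i : ZMod p.natAbs).val : ℤ),
              ((j : ZMod q.natAbs).val : ℤ)) : ℤ × ℤ)
          = Multiplicative.ofAdd ((p * s, q * t) : ℤ × ℤ) := by
        apply Multiplicative.toAdd.injective
        simp only [toAdd_mul, toAdd_inv, toAdd_ofAdd]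
        rw [← hs, ← ht]
        rw [Prod.ext_iff]
        constructor <;> simp <;> ring
      rw [hw]
      exact key s t
    intro z
    obtain ⟨w, rfl⟩ := QuotientGroup.mk_surjective z
    obtain ⟨x, hx⟩ := hsurj (Multiplicative.toAdd w).1 (Multiplicative.toAdd w).2
    exact ⟨x, by simpa using hx.symm⟩
  exact Subgroup.index_ne_zero_of_finite

/-- If 1 → F → G → ℤ² → 1 is exact with F finite, then G is almost abelian;
if moreover G is torsion-free, then G contains a finite-index subgroup
isomorphic to ℤ². -/
theorem almost_abelian_of_extension_by_Z2 {G : Type*} [Group G]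
    (F : Subgroup G) [F.Normal] [Finite F]
    (e : (G ⧸ F) ≃* Multiplicative (ℤ × ℤ)) :
    (∃ A : Subgroup G, IsMulCommutative A ∧ A.index ≠ 0) ∧
      ((∀ g : G, g ≠ 1 → ¬IsOfFinOrder g) →
        ∃ H : Subgroup G, H.index ≠ 0 ∧
          Nonempty (H ≃* Multiplicative (ℤ × ℤ))) := by
  constructor
  · -- almost abelian
    set φ : G →* Multiplicative (ℤ × ℤ) := e.toMonoidHom.comp (QuotientGroup.mk' F) with hφ
    have hφs : Function.Surjective φ := e.surjective.comp (QuotientGroup.mk'_surjective F)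
    have hker : φ.ker = F := by
      ext x
      simp [hφ, MonoidHom.mem_ker, QuotientGroup.eq_one_iff]
    -- the kernel of the conjugation action on F
    set χ : G →* MulAut F := MulAut.conjNormal with hχ
    set N : Subgroup G := χ.ker with hN
    haveI : Finite (MulAut F) :=
      Finite.of_injective (fun a => (a : F → F)) DFunLike.coe_injective
    have hNfi : N.index ≠ 0 := by
      rw [hN, Subgroup.index_ker]
      exact Nat.card_ne_zero.mpr ⟨⟨1⟩, inferInstance⟩
    -- the image of N has finite index
    set m : ℕ := (Subgroup.map φ N).index with hm
    have hmap : Subgroup.comap φ (Subgroup.map φ N) = N ⊔ F := by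
      rw [Subgroup.comap_map_eq, hker]
    have hm0 : m ≠ 0 := by
      have h1 : (Subgroup.map φ N).index = (N ⊔ F).index := by
        rw [← hmap, Subgroup.index_comap_of_surjective _ hφs]
      have h2 : (N ⊔ F).index ∣ N.index := Subgroup.index_dvd_of_le le_sup_left
      rw [hm, h1]
      exact fun h => hNfi (by simpa [h] using h2)
    -- choose a, b in N mapping to (m,0) and (0,m)
    have hg1 : Multiplicative.ofAdd (((m : ℤ), 0) : ℤ × ℤ) ∈ Subgroup.map φ N := by
      have := (Subgroup.map φ N).pow_index_mem (Multiplicative.ofAdd (((1 : ℤ), 0) : ℤ × ℤ))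
      convert this using 1
      apply Multiplicative.toAdd.injective
      simp [toAdd_pow]
      exact hm
    have hg2 : Multiplicative.ofAdd ((0, (m : ℤ)) : ℤ × ℤ) ∈ Subgroup.map φ N := by
      have := (Subgroup.map φ N).pow_index_mem (Multiplicative.ofAdd ((0, (1 : ℤ)) : ℤ × ℤ))
      convert this using 1
      apply Multiplicative.toAdd.injective
      simp [toAdd_pow]
      exact hm
    obtain ⟨a, haN, hφa⟩ := hg1
    obtain ⟨b, hbN, hφb⟩ := hg2
    -- the commutator c lies in F and commutes with a and b
    set c : G := a * b * a⁻¹ * b⁻¹ with hc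
    have hcF : c ∈ F := by
      rw [← hker, MonoidHom.mem_ker]
      simp only [hc, map_mul, map_inv]
      rw [mul_comm (φ a) (φ b)]
      group
    have hconj : ∀ x ∈ F, a * x * a⁻¹ = x := by
      intro x hx
      have h1 : χ a = 1 := haN
      have h2 : χ a ⟨x, hx⟩ = ⟨x, hx⟩ := by rw [h1]; rfl
      calc a * x * a⁻¹ = ((MulAut.conjNormal a ⟨x, hx⟩ : F) : G) :=
            (MulAut.conjNormal_apply a ⟨x, hx⟩).symm
        _ = x := by rw [show MulAut.conjNormal a = χ a from rfl, h2]
    have hac : Commute a c := by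
      have h := hconj c hcF
      rw [mul_inv_eq_iff_eq_mul] at h
      exact h
    set k : ℕ := Nat.card F with hkdef
    have hk0 : k ≠ 0 := Nat.card_ne_zero.mpr ⟨⟨1, one_mem F⟩, inferInstance⟩
    have hck : c ^ k = 1 := by
      have h : (⟨c, hcF⟩ : F) ^ k = 1 := pow_card_eq_one'
      have := congrArg (Subtype.val) h
      simpa using this
    have hab : a * b = c * (b * a) := by rw [hc]; group
    have hstep : ∀ j : ℕ, a ^ j * b = c ^ j * (b * a ^ j) := by
      intro j
      induction j with
      | zero => simp
      | succ j ih =>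
        have hacj : a * c ^ j = c ^ j * a := (hac.pow_right j).eq
        calc a ^ (j + 1) * b = a * (a ^ j * b) := by rw [pow_succ']; group
          _ = a * (c ^ j * (b * a ^ j)) := by rw [ih]
          _ = (a * c ^ j) * (b * a ^ j) := by group
          _ = (c ^ j * a) * (b * a ^ j) := by rw [hacj]
          _ = c ^ j * ((a * b) * a ^ j) := by group
          _ = c ^ j * ((c * (b * a)) * a ^ j) := by rw [hab]
          _ = c ^ (j + 1) * (b * a ^ (j + 1)) := by rw [pow_succ, pow_succ']; group
    have hcomm : Commute (a ^ k) b := by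
      have h := hstep k
      rw [hck, one_mul] at h
      exact h
    -- the abelian subgroup
    set ψ : Multiplicative ℤ × Multiplicative ℤ →* G :=
      MonoidHom.noncommCoprod (zpowersHom G (a ^ k)) (zpowersHom G b)
        (fun s t => hcomm.zpow_zpow _ _) with hψ
    set A : Subgroup G := ψ.range with hA
    have hAcomm : IsMulCommutative A := by
      constructor
      constructor
      rintro ⟨-, x, rfl⟩ ⟨-, y, rfl⟩
      apply Subtype.ext
      show ψ x * ψ y = ψ y * ψ x
      rw [← map_mul, ← map_mul, mul_comm]
    refine ⟨A, hAcomm, ?_⟩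
    -- index computation
    have hakA : a ^ k ∈ A := ⟨(Multiplicative.ofAdd (1 : ℤ), 1), by
      show zpowersHom G (a ^ k) (Multiplicative.ofAdd 1) * zpowersHom G b 1 = a ^ k; simp⟩
    have hbA : b ∈ A := ⟨(1, Multiplicative.ofAdd (1 : ℤ)), by
      show zpowersHom G (a ^ k) 1 * zpowersHom G b (Multiplicative.ofAdd 1) = b; simp⟩
    have hφak : φ (a ^ k) = Multiplicative.ofAdd (((k * m : ℤ), 0) : ℤ × ℤ) := by
      rw [map_pow, hφa]
      apply Multiplicative.toAdd.injective
      simp [toAdd_pow, mul_comm]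
    have hp : Multiplicative.ofAdd (((k * m : ℤ), 0) : ℤ × ℤ) ∈ Subgroup.map φ A :=
      ⟨a ^ k, hakA, hφak⟩
    have hq : Multiplicative.ofAdd ((0, (m : ℤ)) : ℤ × ℤ) ∈ Subgroup.map φ A :=
      ⟨b, hbA, hφb⟩
    have hmapA : (Subgroup.map φ A).index ≠ 0 := by
      apply Z2_index_ne_zero (p := (k * m : ℤ)) (q := (m : ℤ)) ?_ ?_ hp hq
      · exact_mod_cast Nat.mul_ne_zero hk0 hm0
      · exact_mod_cast hm0
    set B : Subgroup G := Subgroup.comap φ (Subgroup.map φ A) with hB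
    have hAB : A ≤ B := Subgroup.le_comap_map φ A
    have hBsup : B = A ⊔ F := by rw [hB, Subgroup.comap_map_eq, hker]
    have hBidx : B.index ≠ 0 := by
      rw [hB, Subgroup.index_comap_of_surjective _ hφs]
      exact hmapA
    have hrel : A.relIndex B ≠ 0 := by
      haveI : Finite (B ⧸ A.subgroupOf B) := by
        apply Finite.of_surjective
          (fun x : F => (QuotientGroup.mk ⟨(x : G), show (x : G) ∈ B by rw [hBsup]; exact Subgroup.mem_sup_right x.2⟩
            : B ⧸ A.subgroupOf B))
        intro z
        obtain ⟨⟨x, hx⟩, rfl⟩ := QuotientGroup.mk_surjective z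
        have hxAF : x ∈ F ⊔ A := by
          have h := hx
          rw [hBsup, sup_comm] at h
          exact h
        have hx' : x ∈ ((F : Set G) * (A : Set G)) := by
          rw [← Subgroup.normal_mul F A]
          exact hxAF
        obtain ⟨f, hf, g, hg, rfl⟩ := hx'
        refine ⟨⟨f, hf⟩, ?_⟩
        rw [QuotientGroup.eq]
        have : (⟨f, show f ∈ B by rw [hBsup]; exact Subgroup.mem_sup_right hf⟩ : B)⁻¹ * ⟨f * g, hx⟩
            = ⟨g, hAB hg⟩ := by
          apply Subtype.ext
          simp [mul_assoc]
        rw [this]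
        simpa [Subgroup.mem_subgroupOf] using hg
      exact Subgroup.index_ne_zero_of_finite
    have := Subgroup.relIndex_mul_index hAB
    rw [← this]
    exact Nat.mul_ne_zero hrel hBidx
  · -- torsion-free case
    intro htf
    have hF : F = ⊥ := by
      rw [eq_bot_iff]
      intro x hx
      rw [Subgroup.mem_bot]
      have hfin : IsOfFinOrder x := by
        obtain ⟨n, hn, hpow⟩ :=
          isOfFinOrder_iff_pow_eq_one.mp (isOfFinOrder_of_finite (⟨x, hx⟩ : F))
        exact isOfFinOrder_iff_pow_eq_one.mpr
          ⟨n, hn, by simpa using congrArg Subtype.val hpow⟩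
      by_contra hx1
      exact htf x hx1 hfin
    subst hF
    exact ⟨⊤, by simp [Subgroup.index_top],
      ⟨Subgroup.topEquiv.trans ((QuotientGroup.quotientBot (G := G)).symm.trans e)⟩⟩
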